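/- Let r ≥ 2 be an integer. For each k = 1,...,r, the vector v_k is an eigenvector of the transpose (M_1)^T corresponding to the eigenvalue λ_k = 2 − 2cos α_k; that is, (M_1)^T · v_k = λ_k · v_k. -/

import Mathlib

open Matrix Real BigOperators

noncomputable section

/-- The divisor-type matrix `M₁`: tridiagonal with diagonal `(1, 2, ..., 2, 3)`
and off-diagonal entries `1` (0-based indexing). -/
def M1 (r : ℕ) : Matrix (Fin r) (Fin r) ℤ :=
  Matrix.of fun i j =>
    if i = j then (if (i : ℕ) = 0 then 1 else if (i : ℕ) = r - 1 then 3 else 2)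
    else if (i : ℕ) + 1 = (j : ℕ) ∨ (j : ℕ) + 1 = (i : ℕ) then 1 else 0

/-- `α_k = (2k - 1)π / (2r)`. -/
def alphaA (r k : ℕ) : ℝ := (2 * (k : ℝ) - 1) * Real.pi / (2 * (r : ℝ))

/-- The vector `v_k` whose `j`-th entry (1-based `j`) is
`(-1)^(r-j) * (1 + ∑_{i=1}^{r-j} 2 cos(i α_k))`; here 0-based indexing. -/
def vvec (r k : ℕ) : Fin r → ℝ :=
  fun j => (-1 : ℝ) ^ (r - 1 - (j : ℕ)) *
    (1 + ∑ i ∈ Finset.Icc 1 (r - 1 - (j : ℕ)), 2 * Real.cos ((i : ℝ) * alphaA r k))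

/-- Auxiliary: partial Dirichlet-type sum. -/
def Tf (r k m : ℕ) : ℝ := 1 + ∑ i ∈ Finset.Icc 1 m, 2 * Real.cos ((i : ℝ) * alphaA r k)

/-- Auxiliary: signed version, the entries of `vvec`. -/
def gf (r k m : ℕ) : ℝ := (-1 : ℝ) ^ m * Tf r k m

lemma Tf_succ (r k m : ℕ) :
    Tf r k (m + 1) = Tf r k m + 2 * Real.cos (((m : ℝ) + 1) * alphaA r k) := by
  simp only [Tf]
  rw [Finset.sum_Icc_succ_top (Nat.succ_le_succ (Nat.zero_le m))]
  push_cast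
  ring

lemma Tf_key (r k m : ℕ) :
    (2 - 2 * Real.cos (alphaA r k)) * Tf r k m =
      2 * Real.cos ((m : ℝ) * alphaA r k) - 2 * Real.cos (((m : ℝ) + 1) * alphaA r k) := by
  induction m with
  | zero => simp [Tf]
  | succ m ih =>
    rw [Tf_succ]
    have h1 : Real.cos (((m : ℝ) + 1 + 1) * alphaA r k) =
        Real.cos (((m : ℝ) + 1) * alphaA r k) * Real.cos (alphaA r k)
          - Real.sin (((m : ℝ) + 1) * alphaA r k) * Real.sin (alphaA r k) := by
      rw [← Real.cos_add]; ring_nf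
    have h2 : Real.cos ((m : ℝ) * alphaA r k) =
        Real.cos (((m : ℝ) + 1) * alphaA r k) * Real.cos (alphaA r k)
          + Real.sin (((m : ℝ) + 1) * alphaA r k) * Real.sin (alphaA r k) := by
      rw [← Real.cos_sub]; ring_nf
    push_cast
    nlinarith [ih, h1, h2]

lemma Tf_rec (r k m : ℕ) :
    Tf r k (m + 2) + Tf r k m = 2 * Real.cos (alphaA r k) * Tf r k (m + 1) := by
  have h1 := Tf_succ r k (m + 1)
  have h2 := Tf_succ r k m
  have h3 := Tf_key r k (m + 1)
  push_cast at h1 h2 h3 ⊢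
  nlinarith [h1, h2, h3]

lemma cos_r_alpha (r k : ℕ) (hr : r ≠ 0) : Real.cos ((r : ℝ) * alphaA r k) = 0 := by
  have hr' : (r : ℝ) ≠ 0 := Nat.cast_ne_zero.mpr hr
  have : (r : ℝ) * alphaA r k = (k : ℝ) * Real.pi - Real.pi / 2 := by
    unfold alphaA; field_simp
  rw [this, Real.cos_sub, Real.cos_pi_div_two, Real.sin_pi_div_two]
  simp [Real.sin_nat_mul_pi]

lemma g_rec (r k p : ℕ) :
    gf r k (p + 2) + 2 * gf r k (p + 1) + gf r k p =
      (2 - 2 * Real.cos (alphaA r k)) * gf r k (p + 1) := by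
  have h := Tf_rec r k p
  simp only [gf, pow_succ]
  linear_combination ((-1 : ℝ) ^ p) * h

lemma g_top (r k n : ℕ) (hn : n + 2 = r) :
    gf r k (n + 1) + gf r k n = (2 - 2 * Real.cos (alphaA r k)) * gf r k (n + 1) := by
  have hkey := Tf_key r k (n + 1)
  have hc : Real.cos (((n : ℝ) + 1 + 1) * alphaA r k) = 0 := by
    have : ((n : ℝ) + 1 + 1) = (r : ℝ) := by
      rw [← hn]; push_cast; ring
    rw [this]; exact cos_r_alpha r k (by omega)
  push_cast at hkey
  rw [hc] at hkey
  have hsucc := Tf_succ r k n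
  simp only [gf, pow_succ]
  push_cast at hkey hsucc ⊢
  linear_combination ((-1 : ℝ) ^ n) * hkey - ((-1 : ℝ) ^ n) * hsucc

lemma g_bot (r k : ℕ) :
    gf r k 1 + 3 * gf r k 0 = (2 - 2 * Real.cos (alphaA r k)) * gf r k 0 := by
  simp [gf, Tf, Finset.Icc_self]
  ring

lemma sum_fin_ite {r : ℕ} (f : Fin r → ℝ) (t : ℕ) :
    (∑ i : Fin r, if (i : ℕ) = t then f i else 0) =
      if h : t < r then f ⟨t, h⟩ else 0 := by
  split
  · next h =>
    rw [show (fun i : Fin r => if (i : ℕ) = t then f i else 0) =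
        fun i : Fin r => if i = ⟨t, h⟩ then f i else 0 from
      funext fun i => by simp [Fin.ext_iff]]
    rw [Finset.sum_ite_eq' Finset.univ (⟨t, h⟩ : Fin r) f]
    simp
  · next h =>
    exact Finset.sum_eq_zero fun i _ => if_neg (by omega)

/-- `v_k` is an eigenvector of `(M₁)ᵀ` with eigenvalue `λ_k = 2 - 2 cos α_k`. -/
theorem M1_transpose_eigenvector (r : ℕ) (hr : 2 ≤ r) (k : ℕ) (hk1 : 1 ≤ k) (hk2 : k ≤ r) :
    (((M1 r).map (Int.cast : ℤ → ℝ)).transpose).mulVec (vvec r k) =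
      (2 - 2 * Real.cos (alphaA r k)) • vvec r k := by
  funext j
  have hvv : ∀ (t : ℕ) (ht : t < r), vvec r k ⟨t, ht⟩ = gf r k (r - 1 - t) := by
    intro t ht; simp [vvec, gf, Tf]
  simp only [Matrix.mulVec, Matrix.transpose_apply, Matrix.map_apply, dotProduct,
    Pi.smul_apply, smul_eq_mul]
  have hsplit : ∀ i : Fin r, ((M1 r i j : ℤ) : ℝ) * vvec r k i =
      (if (i : ℕ) = (j : ℕ) then
        (if (i : ℕ) = 0 then (1 : ℝ) else if (i : ℕ) = r - 1 then 3 else 2) * vvec r k i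
       else 0)
      + (if (i : ℕ) + 1 = (j : ℕ) then vvec r k i else 0)
      + (if (j : ℕ) + 1 = (i : ℕ) then vvec r k i else 0) := by
    intro i
    simp only [M1, Matrix.of_apply, Fin.ext_iff]
    split_ifs <;> first | ring1 | (exfalso; omega) | (push_cast; ring1)
  rw [Finset.sum_congr rfl fun i _ => hsplit i]
  rw [Finset.sum_add_distrib, Finset.sum_add_distrib]
  have hjlt := j.isLt
  by_cases h0 : (j : ℕ) = 0
  · -- first row
    have hsum1 : (∑ i : Fin r, if (i : ℕ) = (j : ℕ) then
        (if (i : ℕ) = 0 then (1 : ℝ) else if (i : ℕ) = r - 1 then 3 else 2) * vvec r k i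
        else 0) = gf r k (r - 1 - (j : ℕ)) := by
      rw [sum_fin_ite, dif_pos hjlt]
      have hc0 : ((⟨(j : ℕ), hjlt⟩ : Fin r) : ℕ) = 0 := h0
      rw [if_pos hc0, one_mul, hvv (j : ℕ) hjlt]
    have hsum2 : (∑ i : Fin r, if (i : ℕ) + 1 = (j : ℕ) then vvec r k i else 0) = 0 :=
      Finset.sum_eq_zero fun i _ => if_neg (by omega)
    have hsum3 : (∑ i : Fin r, if (j : ℕ) + 1 = (i : ℕ) then vvec r k i else 0) =
        gf r k (r - 1 - 1) := by
      rw [show (fun i : Fin r => if (j : ℕ) + 1 = (i : ℕ) then vvec r k i else 0) =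
          fun i : Fin r => if (i : ℕ) = 1 then vvec r k i else 0 from
        funext fun i => by congr 1; simp only [eq_iff_iff]; omega]
      rw [sum_fin_ite, dif_pos (by omega : 1 < r), hvv 1 (by omega)]
    rw [hsum1, hsum2, hsum3]
    have hj' : vvec r k j = gf r k (r - 1 - (j : ℕ)) := by
      rw [show j = ⟨(j : ℕ), hjlt⟩ from rfl, hvv (j : ℕ) hjlt]
    rw [hj', h0]
    rw [show r - 1 - 0 = (r - 2) + 1 from by omega, show r - 1 - 1 = r - 2 from by omega]
    have := g_top r k (r - 2) (by omega)
    linarith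
  · by_cases hlast : (j : ℕ) = r - 1
    · -- last row
      have hsum1 : (∑ i : Fin r, if (i : ℕ) = (j : ℕ) then
          (if (i : ℕ) = 0 then (1 : ℝ) else if (i : ℕ) = r - 1 then 3 else 2) * vvec r k i
          else 0) = 3 * gf r k 0 := by
        rw [sum_fin_ite, dif_pos hjlt]
        rw [if_neg (show ¬(((⟨(j : ℕ), hjlt⟩ : Fin r) : ℕ) = 0) from h0),
          if_pos (show ((⟨(j : ℕ), hjlt⟩ : Fin r) : ℕ) = r - 1 from hlast),
          hvv (j : ℕ) hjlt, show r - 1 - (j : ℕ) = 0 from by omega]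
      have hsum2 : (∑ i : Fin r, if (i : ℕ) + 1 = (j : ℕ) then vvec r k i else 0) =
          gf r k 1 := by
        rw [show (fun i : Fin r => if (i : ℕ) + 1 = (j : ℕ) then vvec r k i else 0) =
            fun i : Fin r => if (i : ℕ) = r - 2 then vvec r k i else 0 from
          funext fun i => by congr 1; simp only [eq_iff_iff]; omega]
        rw [sum_fin_ite, dif_pos (by omega : r - 2 < r), hvv (r - 2) (by omega),
          show r - 1 - (r - 2) = 1 from by omega]
      have hsum3 : (∑ i : Fin r, if (j : ℕ) + 1 = (i : ℕ) then vvec r k i else 0) = 0 :=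
        Finset.sum_eq_zero fun i _ => if_neg (by omega)
      rw [hsum1, hsum2, hsum3]
      have hj' : vvec r k j = gf r k (r - 1 - (j : ℕ)) := by
        rw [show j = ⟨(j : ℕ), hjlt⟩ from rfl, hvv (j : ℕ) hjlt]
      rw [hj', show r - 1 - (j : ℕ) = 0 from by omega]
      have := g_bot r k
      linarith
    · -- interior row
      have hj1 : 1 ≤ (j : ℕ) := by omega
      have hj2 : (j : ℕ) ≤ r - 2 := by omega
      have hsum1 : (∑ i : Fin r, if (i : ℕ) = (j : ℕ) then
          (if (i : ℕ) = 0 then (1 : ℝ) else if (i : ℕ) = r - 1 then 3 else 2) * vvec r k i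
          else 0) = 2 * gf r k (r - 2 - (j : ℕ) + 1) := by
        rw [sum_fin_ite, dif_pos hjlt]
        rw [if_neg (show ¬(((⟨(j : ℕ), hjlt⟩ : Fin r) : ℕ) = 0) from h0),
          if_neg (show ¬(((⟨(j : ℕ), hjlt⟩ : Fin r) : ℕ) = r - 1) from hlast),
          hvv (j : ℕ) hjlt, show r - 1 - (j : ℕ) = r - 2 - (j : ℕ) + 1 from by omega]
      have hsum2 : (∑ i : Fin r, if (i : ℕ) + 1 = (j : ℕ) then vvec r k i else 0) =
          gf r k (r - 2 - (j : ℕ) + 2) := by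
        rw [show (fun i : Fin r => if (i : ℕ) + 1 = (j : ℕ) then vvec r k i else 0) =
            fun i : Fin r => if (i : ℕ) = (j : ℕ) - 1 then vvec r k i else 0 from
          funext fun i => by congr 1; simp only [eq_iff_iff]; omega]
        rw [sum_fin_ite, dif_pos (by omega : (j : ℕ) - 1 < r), hvv ((j : ℕ) - 1) (by omega),
          show r - 1 - ((j : ℕ) - 1) = r - 2 - (j : ℕ) + 2 from by omega]
      have hsum3 : (∑ i : Fin r, if (j : ℕ) + 1 = (i : ℕ) then vvec r k i else 0) =
          gf r k (r - 2 - (j : ℕ)) := by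
        rw [show (fun i : Fin r => if (j : ℕ) + 1 = (i : ℕ) then vvec r k i else 0) =
            fun i : Fin r => if (i : ℕ) = (j : ℕ) + 1 then vvec r k i else 0 from
          funext fun i => by congr 1; simp only [eq_iff_iff]; omega]
        rw [sum_fin_ite, dif_pos (by omega : (j : ℕ) + 1 < r), hvv ((j : ℕ) + 1) (by omega),
          show r - 1 - ((j : ℕ) + 1) = r - 2 - (j : ℕ) from by omega]
      rw [hsum1, hsum2, hsum3]
      have hj' : vvec r k j = gf r k (r - 1 - (j : ℕ)) := by
        rw [show j = ⟨(j : ℕ), hjlt⟩ from rfl, hvv (j : ℕ) hjlt]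
      rw [hj', show r - 1 - (j : ℕ) = r - 2 - (j : ℕ) + 1 from by omega]
      have := g_rec r k (r - 2 - (j : ℕ))
      linarith
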